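/- Every self-adjoint linear relation Λ on G admits a normalized parameterization: there exist bounded linear operators A, B on G with A B* = B A*, with M^{A,B} boundedly invertible, and with Λ = Λ^{A,B}. -/

import Mathlib

open ContinuousLinearMap

variable {G : Type*} [NormedAddCommGroup G] [InnerProductSpace ℂ G] [CompleteSpace G]

/-- The operator `M^{A,B}` on `G × G`, `(x₁,x₂) ↦ (A x₁ - B x₂, B x₁ + A x₂)`. -/
noncomputable def MAB (A B : G →L[ℂ] G) : (G × G) →L[ℂ] (G × G) :=
  ((A.comp (fst ℂ G G)) - (B.comp (snd ℂ G G))).prod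
    ((B.comp (fst ℂ G G)) + (A.comp (snd ℂ G G)))

/-- The linear relation `Λ^{A,B} = {(x₁,x₂) : A x₁ = B x₂}`. -/
def LambdaAB (A B : G →L[ℂ] G) : Submodule ℂ (G × G) where
  carrier := {p | A p.1 = B p.2}
  add_mem' := by
    intro a b ha hb
    simp only [Set.mem_setOf_eq] at *
    simp [ha, hb]
  zero_mem' := by simp
  smul_mem' := by
    intro c p hp
    simp only [Set.mem_setOf_eq] at *
    simp [hp]

/-- The adjoint of a linear relation. -/
def relAdjoint (Λ : Submodule ℂ (G × G)) : Submodule ℂ (G × G) where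
  carrier := {p | ∀ q ∈ Λ, (inner ℂ p.1 q.2 : ℂ) = inner ℂ p.2 q.1}
  add_mem' := by
    intro a b ha hb q hq
    simp [inner_add_left, ha q hq, hb q hq]
  zero_mem' := by
    intro q hq; simp
  smul_mem' := by
    intro c p hp q hq
    simp [inner_smul_left, hp q hq]

/-- A linear relation is self-adjoint if it equals its adjoint. -/
def IsSelfAdjointRel (Λ : Submodule ℂ (G × G)) : Prop := relAdjoint Λ = Λ

/-- A bounded operator is boundedly invertible if it has a bounded two-sided inverse. -/
def IsBoundedlyInvertible {E F : Type*} [NormedAddCommGroup E] [NormedSpace ℂ E]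
    [NormedAddCommGroup F] [NormedSpace ℂ F] (T : E →L[ℂ] F) : Prop :=
  ∃ T' : F →L[ℂ] E, (∀ x, T' (T x) = x) ∧ (∀ y, T (T' y) = y)

/-- The pair `(A,B)` is normalized if `A B* = B A*` and `M^{A,B}` is boundedly invertible. -/
noncomputable def IsNormalized (A B : G →L[ℂ] G) : Prop :=
  A ∘L adjoint B = B ∘L adjoint A ∧ IsBoundedlyInvertible (MAB A B)

open scoped InnerProductSpace

noncomputable def gL (σ : ℂ) : (G × G) →L[ℂ] G := snd ℂ G G + σ • fst ℂ G G

omit [CompleteSpace G] in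
lemma gL_apply (σ : ℂ) (p : G × G) : gL σ p = p.2 + σ • p.1 := by simp [gL]

omit [CompleteSpace G] in
lemma inner_gL {σ : ℂ} (hconj : (starRingEnd ℂ) σ = -σ) (hσ2 : σ * σ = -1) (p q : G × G) :
    ⟪gL σ p, gL σ q⟫_ℂ = (⟪p.1, q.1⟫_ℂ + ⟪p.2, q.2⟫_ℂ)
      + σ * (⟪p.2, q.1⟫_ℂ - ⟪p.1, q.2⟫_ℂ) := by
  simp [gL_apply, inner_add_left, inner_add_right, inner_smul_left, inner_smul_right, hconj]
  linear_combination (-⟪p.1, q.1⟫_ℂ) * hσ2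

omit [CompleteSpace G] in
lemma hsymm (Λ : Submodule ℂ (G × G)) (hΛ : IsSelfAdjointRel Λ) :
    ∀ p ∈ Λ, ∀ q ∈ Λ, ⟪p.1, q.2⟫_ℂ = ⟪p.2, q.1⟫_ℂ := by
  intro p hp q hq
  rw [← hΛ] at hp
  exact hp q hq

omit [CompleteSpace G] in
lemma hclosed (Λ : Submodule ℂ (G × G)) (hΛ : IsSelfAdjointRel Λ) :
    IsClosed (Λ : Set (G × G)) := by
  rw [← hΛ]
  have h : (relAdjoint Λ : Set (G × G)) =
      ⋂ q ∈ Λ, {p : G × G | ⟪p.1, q.2⟫_ℂ = ⟪p.2, q.1⟫_ℂ} := by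
    ext p
    simp only [relAdjoint, Set.mem_iInter, SetLike.mem_coe, Set.mem_setOf_eq]
    exact Iff.rfl
  rw [h]
  exact isClosed_biInter fun q hq => isClosed_eq
    (continuous_fst.inner continuous_const) (continuous_snd.inner continuous_const)

omit [CompleteSpace G] in
lemma inner_gL_mem (Λ : Submodule ℂ (G × G)) (hΛ : IsSelfAdjointRel Λ)
    {σ : ℂ} (hconj : (starRingEnd ℂ) σ = -σ) (hσ2 : σ * σ = -1)
    {p q : G × G} (hp : p ∈ Λ) (hq : q ∈ Λ) :
    ⟪gL σ p, gL σ q⟫_ℂ = ⟪p.1, q.1⟫_ℂ + ⟪p.2, q.2⟫_ℂ := by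
  rw [inner_gL hconj hσ2, hsymm Λ hΛ p hp q hq]
  ring

omit [CompleteSpace G] in
lemma norm_gL_mem (Λ : Submodule ℂ (G × G)) (hΛ : IsSelfAdjointRel Λ)
    {σ : ℂ} (hconj : (starRingEnd ℂ) σ = -σ) (hσ2 : σ * σ = -1)
    {p : G × G} (hp : p ∈ Λ) :
    ‖gL σ p‖ ^ 2 = ‖p.1‖ ^ 2 + ‖p.2‖ ^ 2 := by
  have h := inner_gL_mem Λ hΛ hconj hσ2 hp hp
  rw [inner_self_eq_norm_sq_to_K, inner_self_eq_norm_sq_to_K, inner_self_eq_norm_sq_to_K] at h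
  exact_mod_cast h

lemma gL_bij (Λ : Submodule ℂ (G × G)) (hΛ : IsSelfAdjointRel Λ)
    {σ : ℂ} (hconj : (starRingEnd ℂ) σ = -σ) (hσ2 : σ * σ = -1) :
    Function.Bijective ((gL σ).comp Λ.subtypeL) := by
  haveI : CompleteSpace Λ := (hclosed Λ hΛ).completeSpace_coe
  set r := (gL σ).comp Λ.subtypeL with hr
  have hanti : AntilipschitzWith 1 r := by
    refine AntilipschitzWith.of_le_mul_dist fun p q => ?_
    rw [dist_eq_norm, dist_eq_norm, ← map_sub, NNReal.coe_one, one_mul]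
    have hsq := norm_gL_mem Λ hΛ hconj hσ2 (p - q).2
    have hle : ‖((p - q : Λ) : G × G)‖ ^ 2 ≤ ‖gL σ ((p - q : Λ) : G × G)‖ ^ 2 := by
      rw [hsq, Prod.norm_def]
      rcases max_cases ‖((p-q : Λ) : G × G).1‖ ‖((p-q : Λ) : G × G).2‖ with ⟨h1, _⟩ | ⟨h1, _⟩ <;>
        rw [h1] <;> nlinarith [norm_nonneg ((p-q : Λ) : G × G).1, norm_nonneg ((p-q : Λ) : G × G).2]
    have := Real.sqrt_le_sqrt hle
    rwa [Real.sqrt_sq (norm_nonneg _), Real.sqrt_sq (norm_nonneg _)] at this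
  have hinj : Function.Injective r := hanti.injective
  have hclosed_range : IsClosed (LinearMap.range (r : ↥Λ →ₗ[ℂ] G) : Set G) :=
    ContinuousLinearMap.closed_range_of_antilipschitz hanti ▸
      (LinearMap.range (r : ↥Λ →ₗ[ℂ] G)).isClosed_topologicalClosure
  haveI : CompleteSpace (LinearMap.range (r : ↥Λ →ₗ[ℂ] G)) := hclosed_range.completeSpace_coe
  have hbot : (LinearMap.range (r : ↥Λ →ₗ[ℂ] G))ᗮ = ⊥ := by
    rw [Submodule.eq_bot_iff]
    intro w hw
    have hw' : ∀ p : Λ, ⟪r p, w⟫_ℂ = 0 := fun p =>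
      (Submodule.mem_orthogonal _ w).mp hw (r p) (LinearMap.mem_range_self _ p)
    have hmem : ((w, σ • w) : G × G) ∈ Λ := by
      rw [← hΛ]
      intro q hq
      have h0 := hw' ⟨q, hq⟩
      simp only [hr, ContinuousLinearMap.comp_apply, Submodule.subtypeL_apply, gL_apply] at h0
      rw [inner_add_left, inner_smul_left, hconj] at h0
      have h1 : ⟪w, q.2⟫_ℂ + σ * ⟪w, q.1⟫_ℂ = 0 := by
        have h2 := congrArg (starRingEnd ℂ) h0
        simpa [inner_conj_symm, map_add, map_mul, hconj] using h2
      rw [inner_smul_left, hconj]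
      linear_combination h1
    have hs := hsymm Λ hΛ _ hmem _ hmem
    simp only [inner_smul_left, inner_smul_right, hconj] at hs
    have hσne : σ ≠ 0 := by
      intro h; rw [h] at hσ2; simp at hσ2
    have : ⟪w, w⟫_ℂ = 0 := by
      have h2 : (2 * σ) * ⟪w, w⟫_ℂ = 0 := by linear_combination hs
      rcases mul_eq_zero.mp h2 with h | h
      · exact absurd h (by simpa using hσne)
      · exact h
    simpa [inner_self_eq_zero] using this
  have hsurj : Function.Surjective r := by
    have htop : LinearMap.range (r : ↥Λ →ₗ[ℂ] G) = ⊤ := by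
      rwa [← Submodule.orthogonal_eq_bot_iff]
    exact LinearMap.range_eq_top.mp htop
  exact ⟨hinj, hsurj⟩

omit [CompleteSpace G] in
lemma conj_negI : (starRingEnd ℂ) (-Complex.I) = -(-Complex.I) := by simp

omit [CompleteSpace G] in
lemma negI_sq : (-Complex.I) * (-Complex.I) = -1 := by
  simpa using Complex.I_mul_I

noncomputable def epE (Λ : Submodule ℂ (G × G)) (hΛ : IsSelfAdjointRel Λ) : ↥Λ ≃ₗ[ℂ] G :=
  LinearEquiv.ofBijective ((gL Complex.I).comp Λ.subtypeL).toLinearMap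
    (gL_bij Λ hΛ Complex.conj_I Complex.I_mul_I)

noncomputable def emE (Λ : Submodule ℂ (G × G)) (hΛ : IsSelfAdjointRel Λ) : ↥Λ ≃ₗ[ℂ] G :=
  LinearEquiv.ofBijective ((gL (-Complex.I)).comp Λ.subtypeL).toLinearMap
    (gL_bij Λ hΛ conj_negI negI_sq)

lemma epE_apply (Λ : Submodule ℂ (G × G)) (hΛ : IsSelfAdjointRel Λ) (P : ↥Λ) :
    epE Λ hΛ P = (P : G × G).2 + Complex.I • (P : G × G).1 := by
  simp [epE, LinearEquiv.ofBijective_apply, gL_apply]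

lemma emE_apply (Λ : Submodule ℂ (G × G)) (hΛ : IsSelfAdjointRel Λ) (P : ↥Λ) :
    emE Λ hΛ P = (P : G × G).2 - Complex.I • (P : G × G).1 := by
  simp [emE, LinearEquiv.ofBijective_apply, gL_apply]
  module

noncomputable def VE (Λ : Submodule ℂ (G × G)) (hΛ : IsSelfAdjointRel Λ) : G ≃ₗᵢ[ℂ] G :=
  ((epE Λ hΛ).symm.trans (emE Λ hΛ)).isometryOfInner (by
    intro u u'
    show ⟪emE Λ hΛ ((epE Λ hΛ).symm u), emE Λ hΛ ((epE Λ hΛ).symm u')⟫_ℂ = ⟪u, u'⟫_ℂ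
    set P := (epE Λ hΛ).symm u
    set Q := (epE Λ hΛ).symm u'
    have hu : epE Λ hΛ P = u := (epE Λ hΛ).apply_symm_apply u
    have hu' : epE Λ hΛ Q = u' := (epE Λ hΛ).apply_symm_apply u'
    have h1 : ⟪(emE Λ hΛ) P, (emE Λ hΛ) Q⟫_ℂ = ⟪(P : G × G).1, (Q : G × G).1⟫_ℂ
        + ⟪(P : G × G).2, (Q : G × G).2⟫_ℂ := by
      have := inner_gL_mem Λ hΛ conj_negI negI_sq P.2 Q.2
      simpa [emE, LinearEquiv.ofBijective_apply] using this
    have h2 : ⟪(epE Λ hΛ) P, (epE Λ hΛ) Q⟫_ℂ = ⟪(P : G × G).1, (Q : G × G).1⟫_ℂ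
        + ⟪(P : G × G).2, (Q : G × G).2⟫_ℂ := by
      have := inner_gL_mem Λ hΛ Complex.conj_I Complex.I_mul_I P.2 Q.2
      simpa [epE, LinearEquiv.ofBijective_apply] using this
    rw [h1, ← h2, hu, hu'])

lemma VE_apply (Λ : Submodule ℂ (G × G)) (hΛ : IsSelfAdjointRel Λ) (P : ↥Λ) :
    VE Λ hΛ ((P : G × G).2 + Complex.I • (P : G × G).1)
      = (P : G × G).2 - Complex.I • (P : G × G).1 := by
  have h : VE Λ hΛ (epE Λ hΛ P) = emE Λ hΛ ((epE Λ hΛ).symm (epE Λ hΛ P)) := rfl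
  rw [(epE Λ hΛ).symm_apply_apply] at h
  rw [← epE_apply Λ hΛ P, ← emE_apply Λ hΛ P]
  exact h

omit [CompleteSpace G] in
lemma MAB_apply (A B : G →L[ℂ] G) (x : G × G) :
    MAB A B x = (A x.1 - B x.2, B x.1 + A x.2) := by
  simp [MAB]

/-- Every self-adjoint linear relation admits a normalized
parameterization. -/
theorem exists_normalized_parameterization (Λ : Submodule ℂ (G × G))
    (hΛ : IsSelfAdjointRel Λ) :
    ∃ A B : G →L[ℂ] G, A ∘L adjoint B = B ∘L adjoint A ∧
      IsBoundedlyInvertible (MAB A B) ∧ Λ = LambdaAB A B := by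
  set Vc : G →L[ℂ] G := ((VE Λ hΛ) : G →L[ℂ] G) with hVc
  set Wc : G →L[ℂ] G := ((VE Λ hΛ).symm : G →L[ℂ] G) with hWc
  have hVca : ∀ z, Vc z = VE Λ hΛ z := fun z => rfl
  have hWca : ∀ z, Wc z = (VE Λ hΛ).symm z := fun z => rfl
  have hWV : ∀ y, Wc (Vc y) = y := fun y => (VE Λ hΛ).symm_apply_apply y
  have hVW : ∀ y, Vc (Wc y) = y := fun y => (VE Λ hΛ).apply_symm_apply y
  set A : G →L[ℂ] G := (-Complex.I) • (ContinuousLinearMap.id ℂ G + Vc) with hAdef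
  set B : G →L[ℂ] G := Vc - ContinuousLinearMap.id ℂ G with hBdef
  have hA : ∀ y, A y = (-Complex.I) • (y + Vc y) := by intro y; simp [hAdef]
  have hB : ∀ y, B y = Vc y - y := by intro y; simp [hBdef]
  have hadjV : adjoint Vc = Wc := (VE Λ hΛ).adjoint_eq_symm
  have hadjB : adjoint B = Wc - ContinuousLinearMap.id ℂ G := by
    rw [hBdef, map_sub, hadjV, adjoint_id]
  have hadjA : adjoint A = Complex.I • (ContinuousLinearMap.id ℂ G + Wc) := by
    rw [hAdef, map_smulₛₗ, map_add, hadjV, adjoint_id]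
    simp
  refine ⟨A, B, ?_, ?_, ?_⟩
  · ext x
    simp only [ContinuousLinearMap.comp_apply, hadjA, hadjB,
      ContinuousLinearMap.smul_apply, ContinuousLinearMap.sub_apply,
      ContinuousLinearMap.add_apply, ContinuousLinearMap.id_apply]
    rw [hA, hB, map_sub, map_smul, map_add, hVW]
    module
  · refine ⟨MAB ((-(4:ℂ)⁻¹) • (Wc ∘L A)) ((4:ℂ)⁻¹ • (Wc ∘L B)), ?_, ?_⟩
    · intro x
      rw [MAB_apply, MAB_apply]
      have hexp : ∀ z : G × G, z = (x.1, x.2) → True := fun _ _ => trivial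
      refine Prod.ext ?_ ?_ <;>
      · simp only [ContinuousLinearMap.smul_apply, ContinuousLinearMap.comp_apply,
          hA, hB, map_sub, map_add, map_smul, hWV, hVW, smul_add, smul_sub, smul_smul]
        match_scalars
        all_goals ring_nf
        all_goals simp [Complex.I_sq]
        all_goals norm_num
    · intro x
      rw [MAB_apply, MAB_apply]
      refine Prod.ext ?_ ?_ <;>
      · simp only [ContinuousLinearMap.smul_apply, ContinuousLinearMap.comp_apply,
          hA, hB, map_sub, map_add, map_smul, hWV, hVW, smul_add, smul_sub, smul_smul]
        match_scalars
        all_goals ring_nf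
        all_goals simp [Complex.I_sq]
        all_goals norm_num
  · ext p
    have hmemL : p ∈ LambdaAB A B ↔ A p.1 = B p.2 := Iff.rfl
    rw [hmemL]
    constructor
    · intro hp
      have h := VE_apply Λ hΛ ⟨p, hp⟩
      have h' : Vc p.2 + Complex.I • Vc p.1 = p.2 - Complex.I • p.1 := by
        rw [hVca, hVca, ← map_smul, ← map_add]
        exact h
      rw [hA, hB]
      linear_combination (norm := module) -h'
    · intro hp
      rw [hA, hB] at hp
      have h2 : Vc p.2 + Complex.I • Vc p.1 = p.2 - Complex.I • p.1 := by
        linear_combination (norm := module) -hp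
      set P := (epE Λ hΛ).symm (p.2 + Complex.I • p.1) with hP
      have h1 : (P : G × G).2 + Complex.I • (P : G × G).1 = p.2 + Complex.I • p.1 := by
        rw [← epE_apply Λ hΛ P, hP, (epE Λ hΛ).apply_symm_apply]
      have hv := VE_apply Λ hΛ P
      rw [h1] at hv
      have h3 : (P : G × G).2 - Complex.I • (P : G × G).1 = p.2 - Complex.I • p.1 := by
        rw [← hv, ← h2, ← hVca, map_add, map_smul]
      have e1 : (P : G × G).1 = p.1 := by
        have e : (2 * Complex.I) • (P : G × G).1 = (2 * Complex.I) • p.1 := by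
          linear_combination (norm := module) h1 - h3
        exact smul_right_injective G (by simp [Complex.I_ne_zero]) e
      have e2 : (P : G × G).2 = p.2 := by
        have e : (2 : ℂ) • (P : G × G).2 = (2 : ℂ) • p.2 := by
          linear_combination (norm := module) h1 + h3
        exact smul_right_injective G (by norm_num) e
      have : (P : G × G) = p := Prod.ext e1 e2
      rw [← this]
      exact P.2
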